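/- Let P be a finite nonempty set of points in ℝ^d, and let c_P be the center and r_P the radius of its minimum enclosing ball. Then for any point p ∈ ℝ^d at distance K = ‖p − c_P‖ from c_P, there exists a point q ∈ P such that ‖p − q‖ ≥ √(r_P² + K²). -/

import Mathlib

set_option maxHeartbeats 1000000

/-- `IsMEB P c r` says the closed ball of center `c` and radius `r` is the minimum enclosing
ball of `P`: it contains `P`, and any ball containing `P` has radius at least `r`. -/
def IsMEB {d : ℕ} (P : Set (EuclideanSpace ℝ (Fin d)))
    (c : EuclideanSpace ℝ (Fin d)) (r : ℝ) : Prop :=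
  (∀ p ∈ P, dist p c ≤ r) ∧
    ∀ (c' : EuclideanSpace ℝ (Fin d)) (r' : ℝ), (∀ p ∈ P, dist p c' ≤ r') → r ≤ r'

open Finset in
/-- Key lemma: for any direction `u`, there is a point of `P` on the sphere of the MEB lying in
the halfspace `⟪q - c, u⟫ ≤ 0`. -/
lemma meb_exists_sphere_point {d : ℕ} (P : Set (EuclideanSpace ℝ (Fin d)))
    (hfin : P.Finite) (hne : P.Nonempty) (c : EuclideanSpace ℝ (Fin d)) (r : ℝ)
    (hmeb : IsMEB P c r) (u : EuclideanSpace ℝ (Fin d)) :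
    ∃ q ∈ P, (inner ℝ (q - c) u : ℝ) ≤ 0 ∧ dist q c = r := by
  classical
  by_contra h
  push_neg at h
  obtain ⟨q0, hq0⟩ := hne
  have hr0 : 0 ≤ r := le_trans dist_nonneg (hmeb.1 q0 hq0)
  have hrpos : 0 < r := by
    rcases lt_or_eq_of_le hr0 with h' | h'
    · exact h'
    · exfalso
      have hd : dist q0 c = r := le_antisymm (hmeb.1 q0 hq0) (h' ▸ dist_nonneg)
      have hq0c : q0 = c := by
        have : dist q0 c = 0 := by rw [hd, ← h']
        exact dist_eq_zero.mp this
      exact h q0 hq0 (by simp [hq0c]) hd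
  set S : Finset (EuclideanSpace ℝ (Fin d)) := hfin.toFinset with hSdef
  have hS : S.Nonempty := ⟨q0, hfin.mem_toFinset.mpr hq0⟩
  have hmemS : ∀ q, q ∈ S ↔ q ∈ P := fun q => hfin.mem_toFinset
  have hlt : ∀ q ∈ P, (inner ℝ (q - c) u : ℝ) ≤ 0 → dist q c < r := by
    intro q hq hqu
    exact lt_of_le_of_ne (hmeb.1 q hq) (h q hq hqu)
  set f : EuclideanSpace ℝ (Fin d) → ℝ :=
    fun q => if (inner ℝ (q - c) u : ℝ) ≤ 0 then dist q c else 0 with hf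
  set m : ℝ := S.sup' hS f with hm
  have hm_lt : m < r := by
    rw [hm, Finset.sup'_lt_iff]
    intro q hq
    show (if (inner ℝ (q - c) u : ℝ) ≤ 0 then dist q c else 0) < r
    split_ifs with h'
    · exact hlt q ((hmemS q).mp hq) h'
    · exact hrpos
  have hm0 : 0 ≤ m := by
    refine le_trans ?_ (Finset.le_sup' f hS.choose_spec)
    show 0 ≤ (if (inner ℝ (hS.choose - c) u : ℝ) ≤ 0 then dist hS.choose c else 0)
    split_ifs with h'
    · exact dist_nonneg
    · exact le_refl 0
  have hmB : ∀ q ∈ P, (inner ℝ (q - c) u : ℝ) ≤ 0 → dist q c ≤ m := by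
    intro q hq hqu
    have h1 : f q ≤ m := Finset.le_sup' f ((hmemS q).mpr hq)
    rw [hf] at h1
    simp only [if_pos hqu] at h1
    exact h1
  set g : EuclideanSpace ℝ (Fin d) → ℝ :=
    fun q => if (inner ℝ (q - c) u : ℝ) ≤ 0 then 1 else (inner ℝ (q - c) u : ℝ) with hg
  set δ : ℝ := S.inf' hS g with hδ
  have hδpos : 0 < δ := by
    rw [hδ, Finset.lt_inf'_iff]
    intro q hq
    show 0 < (if (inner ℝ (q - c) u : ℝ) ≤ 0 then 1 else (inner ℝ (q - c) u : ℝ))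
    split_ifs with h'
    · exact one_pos
    · exact lt_of_not_ge h'
  have hδA : ∀ q ∈ P, ¬ ((inner ℝ (q - c) u : ℝ) ≤ 0) → δ ≤ (inner ℝ (q - c) u : ℝ) := by
    intro q hq hqu
    have h1 : δ ≤ g q := Finset.inf'_le g ((hmemS q).mpr hq)
    rw [hg] at h1
    simp only [if_neg hqu] at h1
    exact h1
  set ε : ℝ := min (δ / (‖u‖^2 + 1)) ((r - m) / (‖u‖ + 1)) with hε
  have hupos : (0:ℝ) < ‖u‖^2 + 1 := by positivity
  have hu1pos : (0:ℝ) < ‖u‖ + 1 := by positivity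
  have hrm : 0 < r - m := by linarith
  have hεpos : 0 < ε := by
    apply lt_min
    · positivity
    · positivity
  have hε1 : ε * ‖u‖^2 < 2 * δ := by
    have h1 : ε ≤ δ / (‖u‖^2 + 1) := min_le_left _ _
    have h2 : ε * ‖u‖^2 ≤ δ / (‖u‖^2 + 1) * ‖u‖^2 :=
      mul_le_mul_of_nonneg_right h1 (by positivity)
    have h3 : δ / (‖u‖^2 + 1) * ‖u‖^2 < 2 * δ := by
      rw [div_mul_eq_mul_div, div_lt_iff₀ hupos]
      nlinarith [norm_nonneg u, sq_nonneg (‖u‖)]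
    linarith
  have hε2 : ε * ‖u‖ < r - m := by
    have h1 : ε ≤ (r - m) / (‖u‖ + 1) := min_le_right _ _
    have h2 : ε * ‖u‖ ≤ (r - m) / (‖u‖ + 1) * ‖u‖ :=
      mul_le_mul_of_nonneg_right h1 (norm_nonneg u)
    have h3 : (r - m) / (‖u‖ + 1) * ‖u‖ < r - m := by
      rw [div_mul_eq_mul_div, div_lt_iff₀ hu1pos]
      nlinarith [norm_nonneg u]
    linarith
  have hkey : ∀ q ∈ P, dist q (c + ε • u) < r := by
    intro q hq
    by_cases h' : (inner ℝ (q - c) u : ℝ) ≤ 0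
    · -- triangle inequality: dist q (c+εu) ≤ dist q c + ε‖u‖ ≤ m + (r-m) = r
      have hqm : dist q c ≤ m := hmB q hq h'
      have htri : dist q (c + ε • u) ≤ dist q c + dist c (c + ε • u) := dist_triangle _ _ _
      have hcc : dist c (c + ε • u) = ε * ‖u‖ := by
        rw [dist_eq_norm]
        have : c - (c + ε • u) = -(ε • u) := by abel
        rw [this, norm_neg, norm_smul, Real.norm_eq_abs, abs_of_pos hεpos]
      rw [hcc] at htri
      linarith
    · have hexp : dist q (c + ε • u) ^ 2
          = ‖q - c‖^2 - 2 * ε * (inner ℝ (q - c) u : ℝ) + ε^2 * ‖u‖^2 := by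
        rw [dist_eq_norm]
        have h0 : q - (c + ε • u) = (q - c) - ε • u := by abel
        rw [h0, @norm_sub_sq_real (EuclideanSpace ℝ (Fin d)), real_inner_smul_right,
          norm_smul]
        simp [mul_pow, abs_of_pos hεpos]
        ring
      have hδq : δ ≤ (inner ℝ (q - c) u : ℝ) := hδA q hq h'
      have hqr : ‖q - c‖ ≤ r := by rw [← dist_eq_norm]; exact hmeb.1 q hq
      have hnr : ‖q - c‖^2 ≤ r^2 := by nlinarith [norm_nonneg (q - c)]
      have hprod : ε * ‖u‖^2 * ε < 2 * δ * ε := mul_lt_mul_of_pos_right hε1 hεpos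
      have hprod2 : 2 * ε * δ ≤ 2 * ε * (inner ℝ (q - c) u : ℝ) :=
        mul_le_mul_of_nonneg_left hδq (by positivity)
      have hd2 : dist q (c + ε • u) ^ 2 < r ^ 2 := by nlinarith
      nlinarith [dist_nonneg (x := q) (y := c + ε • u), hrpos]
  set r' : ℝ := S.sup' hS (fun q => dist q (c + ε • u)) with hr'
  have hub : ∀ q ∈ P, dist q (c + ε • u) ≤ r' :=
    fun q hq => Finset.le_sup' (fun q => dist q (c + ε • u)) ((hmemS q).mpr hq)
  have h1 : r ≤ r' := hmeb.2 _ _ hub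
  have h2 : r' < r := by
    rw [hr', Finset.sup'_lt_iff]
    intro q hq
    exact hkey q ((hmemS q).mp hq)
  linarith

/-- if `c_P` and `r_P` are the center and radius of the minimum enclosing ball of
a finite nonempty set `P`, then for any point `p` with `K = ‖p − c_P‖`, some `q ∈ P` satisfies
`‖p − q‖ ≥ √(r_P² + K²)`. -/
theorem exists_far_point_of_meb {d : ℕ}
    (P : Set (EuclideanSpace ℝ (Fin d))) (hfin : P.Finite) (hne : P.Nonempty)
    (cP : EuclideanSpace ℝ (Fin d)) (rP : ℝ) (hmeb : IsMEB P cP rP)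
    (p : EuclideanSpace ℝ (Fin d)) :
    ∃ q ∈ P, Real.sqrt (rP ^ 2 + (dist p cP) ^ 2) ≤ dist p q := by
  obtain ⟨q, hqP, hqu, hqr⟩ := meb_exists_sphere_point P hfin hne cP rP hmeb (p - cP)
  refine ⟨q, hqP, ?_⟩
  have hqc : ‖q - cP‖ = rP := by rwa [← dist_eq_norm]
  have hexp : dist p q ^ 2
      = ‖p - cP‖^2 - 2 * (inner ℝ (p - cP) (q - cP) : ℝ) + rP^2 := by
    rw [dist_eq_norm]
    have h0 : p - q = (p - cP) - (q - cP) := by abel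
    rw [h0, @norm_sub_sq_real (EuclideanSpace ℝ (Fin d)), hqc]
  have hinner : (inner ℝ (p - cP) (q - cP) : ℝ) ≤ 0 := by
    rwa [real_inner_comm]
  have hpc : dist p cP = ‖p - cP‖ := dist_eq_norm _ _
  have h2 : rP ^ 2 + (dist p cP) ^ 2 ≤ dist p q ^ 2 := by
    rw [hpc]
    linarith
  calc Real.sqrt (rP ^ 2 + (dist p cP) ^ 2) ≤ Real.sqrt (dist p q ^ 2) :=
        Real.sqrt_le_sqrt h2
    _ = dist p q := Real.sqrt_sq dist_nonneg
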